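/- Let Q be a Hermitian matrix on ℂ^d ⊗ ℂ^d (identified with M_d(ℂ) ⊗ M_d(ℂ) via the Kronecker product). Then one can write Q = Σ_{α=1}^{d²} A_α ⊗ B_α with A_α, B_α ∈ M_d(ℂ) such that: (1) the family {A_α} is pairwise orthogonal with respect to the Hilbert–Schmidt inner product and ‖A_α‖_F ≤ ‖Q‖_F for every α; (2) the family {B_α} is orthonormal with respect to the Hilbert–Schmidt inner product; (3) the linear span of {A_α} is closed under conjugate transpose, and the linear span of {B_α} is closed under conjugate transpose. -/

import Mathlib

open Matrix
open scoped Kronecker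

/-- Hilbert–Schmidt inner product of matrices: ⟨A,B⟩ = Tr(A†B). -/
noncomputable def hsInner {n : Type*} [Fintype n] (A B : Matrix n n ℂ) : ℂ :=
  Matrix.trace (Aᴴ * B)

/-- Frobenius norm of a matrix: ‖A‖_F = √Tr(A†A). -/
noncomputable def frob {n : Type*} [Fintype n] (A : Matrix n n ℂ) : ℝ :=
  Real.sqrt (Matrix.trace (Aᴴ * A)).re

/-- A set of matrices whose linear span is closed under conjugate transpose. -/
def SpanClosedUnderConjTranspose {n : Type*} [Fintype n]
    (S : Set (Matrix n n ℂ)) : Prop :=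
  ∀ X ∈ Submodule.span ℂ S, Xᴴ ∈ Submodule.span ℂ S

lemma hsInner_eq_sum {n : Type*} [Fintype n] (X Y : Matrix n n ℂ) :
    hsInner X Y = ∑ i, ∑ j, star (X i j) * Y i j := by
  simp only [hsInner, Matrix.trace, Matrix.diag, Matrix.mul_apply,
    Matrix.conjTranspose_apply]
  exact Finset.sum_comm

lemma re_hsInner_self {n : Type*} [Fintype n] (X : Matrix n n ℂ) :
    (hsInner X X).re = ∑ i, ∑ j, Complex.normSq (X i j) := by
  rw [hsInner_eq_sum, Complex.re_sum]
  refine Finset.sum_congr rfl fun i _ => ?_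
  rw [Complex.re_sum]
  refine Finset.sum_congr rfl fun j _ => ?_
  have : (starRingEnd ℂ) (X i j) * X i j = (Complex.normSq (X i j) : ℂ) := by
    rw [mul_comm, Complex.mul_conj]
  simp [this]

lemma re_hsInner_self_nonneg {n : Type*} [Fintype n] (X : Matrix n n ℂ) :
    0 ≤ (hsInner X X).re := by
  rw [re_hsInner_self]
  exact Finset.sum_nonneg fun i _ => Finset.sum_nonneg fun j _ => Complex.normSq_nonneg _

lemma frob_eq_sqrt_hsInner {n : Type*} [Fintype n] (X : Matrix n n ℂ) :
    frob X = Real.sqrt (hsInner X X).re := rfl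

/-- **Lemma 1 of the paper.**  Every Hermitian matrix `Q` on `ℂ^d ⊗ ℂ^d` can be
written as `Q = Σ_{α=1}^{d²} A_α ⊗ B_α` where (1) the `A_α` are pairwise
orthogonal with `‖A_α‖_F ≤ ‖Q‖_F`, (2) the `B_α` are orthonormal, and (3) the
spans of `{A_α}` and of `{B_α}` are each closed under conjugate transpose. -/
theorem hermitian_operator_schmidt_decomposition (d : ℕ)
    (Q : Matrix (Fin d × Fin d) (Fin d × Fin d) ℂ) (hQ : Q.IsHermitian) :
    ∃ (A B : Fin (d ^ 2) → Matrix (Fin d) (Fin d) ℂ),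
      Q = ∑ α, A α ⊗ₖ B α ∧
      (∀ α β, α ≠ β → hsInner (A α) (A β) = 0) ∧
      (∀ α, frob (A α) ≤ frob Q) ∧
      (∀ α β, α ≠ β → hsInner (B α) (B β) = 0) ∧
      (∀ α, frob (B α) = 1) ∧
      SpanClosedUnderConjTranspose (Set.range A) ∧
      SpanClosedUnderConjTranspose (Set.range B) := by
  classical
  -- realignment
  set A₀ : (Fin d × Fin d) → Matrix (Fin d) (Fin d) ℂ :=
    fun p => Matrix.of fun i j => Q (i, p.1) (j, p.2) with hA₀
  have hA₀conj : ∀ p : Fin d × Fin d, (A₀ p)ᴴ = A₀ (p.2, p.1) := by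
    intro p
    ext i j
    simp only [conjTranspose_apply, hA₀, Matrix.of_apply]
    exact hQ.apply (i, p.2) (j, p.1)
  -- Gram matrix
  set G : Matrix (Fin d × Fin d) (Fin d × Fin d) ℂ := Matrix.of fun p q => hsInner (A₀ p) (A₀ q) with hGdef
  have hG : G.IsHermitian := by
    ext p q
    simp only [conjTranspose_apply, hGdef, Matrix.of_apply, hsInner]
    rw [← Matrix.trace_conjTranspose, Matrix.conjTranspose_mul,
      Matrix.conjTranspose_conjTranspose]
  set V : Matrix (Fin d × Fin d) (Fin d × Fin d) ℂ := (hG.eigenvectorUnitary : Matrix (Fin d × Fin d) (Fin d × Fin d) ℂ) with hVdef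
  set lam : (Fin d × Fin d) → ℝ := hG.eigenvalues with hlam
  have hVV' : V * Vᴴ = 1 := by
    rw [← Matrix.star_eq_conjTranspose]
    exact (Matrix.mem_unitaryGroup_iff).mp hG.eigenvectorUnitary.2
  have hV'V : Vᴴ * V = 1 := by
    rw [← Matrix.star_eq_conjTranspose]
    exact (Matrix.mem_unitaryGroup_iff').mp hG.eigenvectorUnitary.2
  have h1 : ∀ p q : Fin d × Fin d, ∑ a, V p a * star (V q a) = if p = q then 1 else 0 := by
    intro p q
    have := congrFun (congrFun hVV' p) q
    simpa [Matrix.mul_apply, Matrix.one_apply, Matrix.conjTranspose_apply] using this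
  have h2 : ∀ a b : Fin d × Fin d, ∑ p, star (V p a) * V p b = if a = b then 1 else 0 := by
    intro a b
    have := congrFun (congrFun hV'V a) b
    simpa [Matrix.mul_apply, Matrix.one_apply, Matrix.conjTranspose_apply] using this
  have hdiag : Vᴴ * G * V = Matrix.diagonal (RCLike.ofReal ∘ lam) := by
    rw [← Matrix.star_eq_conjTranspose]
    have := hG.conjStarAlgAut_star_eigenvectorUnitary
    rw [Unitary.conjStarAlgAut_star_apply] at this
    exact this
  -- the families
  set A' : (Fin d × Fin d) → Matrix (Fin d) (Fin d) ℂ := fun a => ∑ p, V p a • A₀ p with hA'def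
  set B' : (Fin d × Fin d) → Matrix (Fin d) (Fin d) ℂ :=
    fun a => Matrix.of fun k l => star (V (k, l) a) with hB'def
  have hsInner_sum : ∀ a b : Fin d × Fin d,
      hsInner (A' a) (A' b) = ∑ p, ∑ q, star (V p a) * (G p q * V q b) := by
    intro a b
    simp only [hA'def, hsInner, conjTranspose_sum, conjTranspose_smul,
      Finset.sum_mul, Finset.mul_sum, Matrix.smul_mul, Matrix.mul_smul,
      trace_sum, trace_smul, hGdef, Matrix.of_apply, smul_eq_mul]
    rw [Finset.sum_comm]
    refine Finset.sum_congr rfl fun p _ => Finset.sum_congr rfl fun q _ => ?_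
    ring
  have hAinner : ∀ a b : Fin d × Fin d, hsInner (A' a) (A' b) =
      Matrix.diagonal (RCLike.ofReal ∘ lam) a b := by
    intro a b
    rw [hsInner_sum a b, ← hdiag]
    simp only [Matrix.mul_apply, Matrix.conjTranspose_apply, Finset.sum_mul]
    rw [Finset.sum_comm]
    refine Finset.sum_congr rfl fun q _ => Finset.sum_congr rfl fun p _ => by ring
  have hBinner : ∀ a b : Fin d × Fin d,
      hsInner (B' a) (B' b) = if a = b then 1 else 0 := by
    intro a b
    rw [hsInner_eq_sum]
    have : ∀ k l : Fin d, star (B' a k l) * B' b k l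
        = V (k, l) a * star (V (k, l) b) := by
      intro k l
      simp only [hB'def, Matrix.of_apply, star_star]
    calc ∑ k, ∑ l, star (B' a k l) * B' b k l
        = ∑ k, ∑ l, V (k, l) a * star (V (k, l) b) := by
          exact Finset.sum_congr rfl fun k _ => Finset.sum_congr rfl fun l _ => this k l
      _ = ∑ p : Fin d × Fin d, V p a * star (V p b) := by
          rw [Fintype.sum_prod_type]
      _ = star (∑ p : Fin d × Fin d, star (V p a) * V p b) := by
          rw [star_sum]
          exact Finset.sum_congr rfl fun p _ => by simp [mul_comm]
      _ = if a = b then 1 else 0 := by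
          rw [h2 a b]
          split <;> simp
  -- recomposition
  have hQsum : Q = ∑ a : Fin d × Fin d, A' a ⊗ₖ B' a := by
    ext ⟨i, k⟩ ⟨j, l⟩
    have : ∀ a : Fin d × Fin d, (A' a ⊗ₖ B' a) (i, k) (j, l)
        = ∑ p, V p a * A₀ p i j * star (V (k, l) a) := by
      intro a
      simp only [Matrix.kroneckerMap_apply, hA'def, hB'def, Matrix.of_apply,
        Matrix.sum_apply, Matrix.smul_apply, smul_eq_mul, Finset.sum_mul]
    rw [Matrix.sum_apply]
    calc Q (i, k) (j, l) = A₀ (k, l) i j := rfl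
      _ = ∑ p, A₀ p i j * (if p = (k, l) then 1 else 0) := by simp
      _ = ∑ p, A₀ p i j * ∑ a, V p a * star (V (k, l) a) := by
          exact Finset.sum_congr rfl fun p _ => by rw [h1 p (k, l)]
      _ = ∑ p, ∑ a, V p a * A₀ p i j * star (V (k, l) a) := by
          refine Finset.sum_congr rfl fun p _ => ?_
          rw [Finset.mul_sum]
          exact Finset.sum_congr rfl fun a _ => by ring
      _ = ∑ a, ∑ p, V p a * A₀ p i j * star (V (k, l) a) := Finset.sum_comm
      _ = ∑ a : Fin d × Fin d, (A' a ⊗ₖ B' a) (i, k) (j, l) := by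
          exact (Finset.sum_congr rfl fun a _ => (this a).symm)
  -- eigenvalues are the squared norms, hence nonnegative
  have hlamA : ∀ a : Fin d × Fin d, (hsInner (A' a) (A' a)).re = lam a := by
    intro a
    rw [hAinner a a]
    simp [Matrix.diagonal_apply_eq]
  have hlam_nonneg : ∀ a : Fin d × Fin d, 0 ≤ lam a := by
    intro a
    rw [← hlamA a]
    exact re_hsInner_self_nonneg _
  -- sum of eigenvalues equals ‖Q‖²
  have htraceG : (Matrix.trace G).re = (hsInner Q Q).re := by
    have h₁ : Matrix.trace G = ∑ p : Fin d × Fin d, hsInner (A₀ p) (A₀ p) := by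
      simp [Matrix.trace, Matrix.diag, hGdef]
    rw [h₁, Complex.re_sum]
    have h₂ : ∀ p : Fin d × Fin d, (hsInner (A₀ p) (A₀ p)).re
        = ∑ i, ∑ j, Complex.normSq (Q (i, p.1) (j, p.2)) := by
      intro p; rw [re_hsInner_self]; rfl
    rw [re_hsInner_self]
    calc ∑ p : Fin d × Fin d, (hsInner (A₀ p) (A₀ p)).re
        = ∑ p : Fin d × Fin d, ∑ i, ∑ j, Complex.normSq (Q (i, p.1) (j, p.2)) :=
          Finset.sum_congr rfl fun p _ => h₂ p
      _ = ∑ k, ∑ l, ∑ i, ∑ j, Complex.normSq (Q (i, k) (j, l)) := by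
          rw [Fintype.sum_prod_type]
      _ = ∑ k, ∑ i, ∑ l, ∑ j, Complex.normSq (Q (i, k) (j, l)) :=
          Finset.sum_congr rfl fun k _ => Finset.sum_comm
      _ = ∑ i, ∑ k, ∑ l, ∑ j, Complex.normSq (Q (i, k) (j, l)) := Finset.sum_comm
      _ = ∑ i, ∑ k, ∑ j, ∑ l, Complex.normSq (Q (i, k) (j, l)) :=
          Finset.sum_congr rfl fun i _ => Finset.sum_congr rfl fun k _ => Finset.sum_comm
      _ = ∑ x : Fin d × Fin d, ∑ y : Fin d × Fin d, Complex.normSq (Q x y) := by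
          rw [Fintype.sum_prod_type]
          exact Finset.sum_congr rfl fun i _ => Finset.sum_congr rfl fun k _ =>
            (Fintype.sum_prod_type (f := fun (y : Fin d × Fin d) => Complex.normSq (Q (i, k) y))).symm
  have hsumlam : ∑ a : Fin d × Fin d, lam a = (hsInner Q Q).re := by
    have hG' : G = V * Matrix.diagonal (RCLike.ofReal ∘ lam) * Vᴴ := by
      have := hG.spectral_theorem
      rw [Unitary.conjStarAlgAut_apply] at this
      rw [← Matrix.star_eq_conjTranspose] at *
      exact this
    have : Matrix.trace G = ∑ a : Fin d × Fin d, (lam a : ℂ) := by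
      rw [hG', Matrix.trace_mul_comm, ← Matrix.mul_assoc, hV'V, Matrix.one_mul,
        Matrix.trace_diagonal]
      rfl
    rw [← htraceG, this, Complex.re_sum]
    simp
  -- Frobenius norm bound
  have hfrobA : ∀ a : Fin d × Fin d, frob (A' a) ≤ frob Q := by
    intro a
    rw [frob_eq_sqrt_hsInner, frob_eq_sqrt_hsInner]
    apply Real.sqrt_le_sqrt
    rw [hlamA a, ← hsumlam]
    exact Finset.single_le_sum (fun b _ => hlam_nonneg b) (Finset.mem_univ a)
  have hfrobB : ∀ a : Fin d × Fin d, frob (B' a) = 1 := by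
    intro a
    rw [frob_eq_sqrt_hsInner, hBinner a a]
    simp
  -- span of A' closed under conjTranspose
  have hA0mem : ∀ p : Fin d × Fin d, A₀ p ∈ Submodule.span ℂ (Set.range A') := by
    intro p
    have hrepr : A₀ p = ∑ a, star (V p a) • A' a := by
      ext i j
      simp only [hA'def, Matrix.sum_apply, Matrix.smul_apply, smul_eq_mul]
      calc A₀ p i j = ∑ q, A₀ q i j * (if q = p then 1 else 0) := by simp
        _ = ∑ q, A₀ q i j * ∑ a, V q a * star (V p a) := by
            exact Finset.sum_congr rfl fun q _ => by rw [h1 q p]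
        _ = ∑ q, ∑ a, star (V p a) * (V q a * A₀ q i j) := by
            refine Finset.sum_congr rfl fun q _ => ?_
            rw [Finset.mul_sum]
            exact Finset.sum_congr rfl fun a _ => by ring
        _ = ∑ a, ∑ q, star (V p a) * (V q a * A₀ q i j) := Finset.sum_comm
        _ = ∑ a, star (V p a) * ∑ q, V q a * A₀ q i j := by
            exact Finset.sum_congr rfl fun a _ => by rw [Finset.mul_sum]
    rw [hrepr]
    exact Submodule.sum_mem _ fun a _ =>
      Submodule.smul_mem _ _ (Submodule.subset_span ⟨a, rfl⟩)
  have hA'conj_mem : ∀ a : Fin d × Fin d,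
      (A' a)ᴴ ∈ Submodule.span ℂ (Set.range A') := by
    intro a
    have : (A' a)ᴴ = ∑ p, star (V p a) • A₀ (p.2, p.1) := by
      simp only [hA'def, Matrix.conjTranspose_sum, Matrix.conjTranspose_smul]
      exact Finset.sum_congr rfl fun p _ => by rw [hA₀conj p]
    rw [this]
    exact Submodule.sum_mem _ fun p _ =>
      Submodule.smul_mem _ _ (hA0mem (p.2, p.1))
  have hspanA : SpanClosedUnderConjTranspose (Set.range A') := by
    intro X hX
    obtain ⟨c, hc⟩ := (Submodule.mem_span_range_iff_exists_fun ℂ).mp hX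
    rw [← hc, Matrix.conjTranspose_sum]
    refine Submodule.sum_mem _ fun a _ => ?_
    rw [Matrix.conjTranspose_smul]
    exact Submodule.smul_mem _ _ (hA'conj_mem a)
  -- span of B' is everything
  have hBtop : ∀ X : Matrix (Fin d) (Fin d) ℂ, X ∈ Submodule.span ℂ (Set.range B') := by
    have hE : ∀ p : Fin d × Fin d,
        Matrix.single p.1 p.2 (1 : ℂ) ∈ Submodule.span ℂ (Set.range B') := by
      intro p
      have : Matrix.single p.1 p.2 (1 : ℂ) = ∑ a, V p a • B' a := by
        ext k l
        simp only [Matrix.sum_apply, Matrix.smul_apply, hB'def, Matrix.of_apply,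
          smul_eq_mul]
        rw [h1 p (k, l)]
        simp [Matrix.single, Prod.ext_iff]
      rw [this]
      exact Submodule.sum_mem _ fun a _ =>
        Submodule.smul_mem _ _ (Submodule.subset_span ⟨a, rfl⟩)
    intro X
    rw [matrix_eq_sum_single X]
    refine Submodule.sum_mem _ fun i _ => Submodule.sum_mem _ fun j _ => ?_
    have : Matrix.single i j (X i j) = X i j • Matrix.single i j (1 : ℂ) := by
      ext k l
      simp [Matrix.single, Matrix.smul_apply]
    rw [this]
    exact Submodule.smul_mem _ _ (hE (i, j))
  have hspanB : SpanClosedUnderConjTranspose (Set.range B') := fun X _ => hBtop Xᴴ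
  -- reindexing
  have e : Fin (d ^ 2) ≃ Fin d × Fin d :=
    (finCongr (by ring : d ^ 2 = d * d)).trans finProdFinEquiv.symm
  refine ⟨A' ∘ e, B' ∘ e, ?_, ?_, ?_, ?_, ?_, ?_, ?_⟩
  · rw [hQsum]
    exact (Equiv.sum_comp e (fun p => A' p ⊗ₖ B' p)).symm
  · intro α β hne
    have : e α ≠ e β := fun h => hne (e.injective h)
    have h := hAinner (e α) (e β)
    rw [Matrix.diagonal_apply_ne _ this] at h
    exact h
  · intro α
    exact hfrobA (e α)
  · intro α β hne
    have : e α ≠ e β := fun h => hne (e.injective h)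
    rw [Function.comp_apply, Function.comp_apply, hBinner (e α) (e β), if_neg this]
  · intro α
    exact hfrobB (e α)
  · rw [Set.range_comp, e.surjective.range_eq, Set.image_univ]
    exact hspanA
  · rw [Set.range_comp, e.surjective.range_eq, Set.image_univ]
    exact hspanB
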